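/- Let f : ℕ → ℕ satisfy f i ≤ 2^i for all i, and define the sequence HP : ℕ → ℚ by HP k = (∑_{i < k} f i) / (∑_{i < k} 2^i) (with HP 0 = 0). If HP is a computable function from ℕ to ℚ, then f is computable. Equivalently (contrapositive, as claimed in the paper): if f is not computable, then the sequence of halting-probability approximations HP is not computable. -/

import Mathlib

namespace HPaux

/-! Auxiliary development: the function `q ↦ (q.num.natAbs, q.den)` on `ℚ` is computable
with respect to Mathlib's (denumerable) `Primcodable ℚ` instance. -/

/-- natAbs of the integer decoded from an `Equiv.intEquivNat` code. -/
def nAbs (a : ℕ) : ℕ := if a % 2 = 0 then a / 2 else a / 2 + 1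

lemma nAbs_intEquivNat (z : ℤ) : nAbs (Equiv.intEquivNat z) = z.natAbs := by
  have h1 : ∀ n : ℕ, Equiv.intEquivNat (Int.ofNat n) = 2 * n := fun n => rfl
  have h2 : ∀ n : ℕ, Equiv.intEquivNat (Int.negSucc n) = 2 * n + 1 := fun n => rfl
  cases z with
  | ofNat n =>
      rw [show ((Int.ofNat n : ℤ)) = Int.ofNat n from rfl, h1]
      simp [nAbs, Nat.mul_mod_right, Nat.mul_div_cancel_left _ (by norm_num : 0 < 2)]
  | negSucc n =>
      rw [h2]
      simp [nAbs, Nat.mul_add_mod, Nat.mul_add_div (by norm_num : 0 < 2)]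

/-- The structural encoding of `ℚ`. -/
def E (q : ℚ) : ℕ := Nat.pair (Equiv.intEquivNat q.num) q.den

lemma encode_eq_E (q : ℚ) : @Encodable.encode ℚ Rat.instEncodable q = E q := rfl

/-- Membership in the range of the structural encoding, as a primrec-friendly predicate. -/
def sP (k : ℕ) : Bool :=
  decide (0 < k.unpair.2) && decide (Nat.gcd (nAbs k.unpair.1) k.unpair.2 = 1)

lemma mem_range_iff (k : ℕ) :
    k ∈ Set.range (@Encodable.encode ℚ Rat.instEncodable) ↔ sP k = true := by
  constructor
  · rintro ⟨q, rfl⟩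
    rw [encode_eq_E]
    simp [sP, E, Nat.unpair_pair, nAbs_intEquivNat, q.pos, q.reduced]
  · intro hk
    simp only [sP, Bool.and_eq_true, decide_eq_true_eq] at hk
    obtain ⟨hpos, hcop⟩ := hk
    set z : ℤ := Equiv.intEquivNat.symm k.unpair.1 with hz
    have hez : Equiv.intEquivNat z = k.unpair.1 := Equiv.apply_symm_apply _ _
    have hna : z.natAbs = nAbs k.unpair.1 := by rw [← hez, nAbs_intEquivNat]
    refine ⟨⟨z, k.unpair.2, Nat.pos_iff_ne_zero.mp hpos, by rw [hna]; exact hcop⟩, ?_⟩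
    rw [encode_eq_E]
    show Nat.pair (Equiv.intEquivNat z) k.unpair.2 = k
    rw [hez, Nat.pair_unpair]

/-- one step of Euclid's algorithm -/
def gstep (p : ℕ × ℕ) : ℕ × ℕ := if p.1 = 0 then p else (p.2 % p.1, p.1)

lemma gstep_iterate : ∀ (n : ℕ) (p : ℕ × ℕ), p.1 ≤ n → (gstep^[n] p).2 = Nat.gcd p.1 p.2 := by
  intro n
  induction n with
  | zero =>
      intro p hp
      have : p.1 = 0 := Nat.le_zero.mp hp
      simp [this, Nat.gcd_zero_left]
  | succ n ih =>
      intro p hp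
      rw [Function.iterate_succ_apply]
      by_cases h : p.1 = 0
      · have hg : gstep p = p := by simp [gstep, h]
        rw [hg, ih p (h ▸ Nat.zero_le n)]
      · have hg : gstep p = (p.2 % p.1, p.1) := by simp [gstep, h]
        rw [hg, ih _ (Nat.lt_succ_iff.mp (lt_of_lt_of_le (Nat.mod_lt _ (Nat.pos_of_ne_zero h)) hp))]
        exact (Nat.gcd_rec p.1 p.2).symm

lemma gcd_eq_iterate (a b : ℕ) : Nat.gcd a b = (gstep^[a] (a, b)).2 :=
  (gstep_iterate a (a, b) le_rfl).symm

lemma primrec_gstep : Primrec gstep := by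
  unfold gstep
  exact Primrec.ite (Primrec.eq.comp Primrec.fst (Primrec.const 0)) Primrec.id
    (Primrec.pair (Primrec.nat_mod.comp Primrec.snd Primrec.fst) Primrec.fst)

lemma primrec_gcd : Primrec₂ Nat.gcd := by
  have h : Primrec fun p : ℕ × ℕ => gstep^[p.1] p :=
    Primrec.nat_iterate Primrec.fst Primrec.id (primrec_gstep.comp Primrec.snd).to₂
  exact (Primrec.snd.comp h).to₂.of_eq fun a b => (gcd_eq_iterate a b).symm

lemma primrec_nAbs : Primrec nAbs := by
  unfold nAbs
  exact Primrec.ite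
    (Primrec.eq.comp (Primrec.nat_mod.comp Primrec.id (Primrec.const 2)) (Primrec.const 0))
    (Primrec.nat_div.comp Primrec.id (Primrec.const 2))
    (Primrec.succ.comp (Primrec.nat_div.comp Primrec.id (Primrec.const 2)))

lemma primrec_sP : Primrec sP := by
  have hu1 : Primrec fun k : ℕ => k.unpair.1 := Primrec.fst.comp Primrec.unpair
  have hu2 : Primrec fun k : ℕ => k.unpair.2 := Primrec.snd.comp Primrec.unpair
  have h1 : Primrec fun k : ℕ => decide (0 < k.unpair.2) :=
    (Primrec.nat_lt.comp (Primrec.const 0) hu2).decide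
  have h2 : Primrec fun k : ℕ => decide (Nat.gcd (nAbs k.unpair.1) k.unpair.2 = 1) :=
    (Primrec.eq.comp (primrec_gcd.comp (primrec_nAbs.comp hu1) hu2) (Primrec.const 1)).decide
  exact Primrec₂.comp (Primrec.dom_bool₂ (· && ·)) h1 h2

/-- count of valid codes below `m` -/
def countB (m : ℕ) : ℕ := (List.range m).countP sP

lemma primrec_countB : Primrec countB := by
  have hfil : Primrec fun m : ℕ => ((List.range m).flatMap fun y => if sP y then [y] else []) := by
    refine Primrec.list_flatMap Primrec.list_range ?_
    have : Primrec fun p : ℕ × ℕ => if sP p.2 then [p.2] else ([] : List ℕ) :=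
      Primrec.ite (Primrec.eq.comp (primrec_sP.comp Primrec.snd) (Primrec.const true))
        (Primrec.list_cons.comp Primrec.snd (Primrec.const [])) (Primrec.const [])
    exact this.to₂
  have key : ∀ l : List ℕ, (l.flatMap fun y => if sP y then [y] else []) = l.filter sP := by
    intro l; induction l with
    | nil => simp
    | cons a l ih => by_cases h : sP a <;> simp [List.filter_cons, h, ih]
  refine (Primrec.list_length.comp hfil).of_eq fun m => ?_
  rw [key, countB, List.countP_eq_length_filter]

lemma countB_mono : Monotone countB := by
  intro a b hab
  obtain ⟨c, rfl⟩ := Nat.exists_eq_add_of_le hab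
  simp only [countB, List.range_add, List.countP_append]
  exact Nat.le_add_right _ _

lemma countB_strict {a b : ℕ} (hab : a < b) (ha : sP a = true) : countB a < countB b := by
  have h1 : countB (a + 1) = countB a + 1 := by
    simp [countB, List.range_succ, List.countP_append, ha]
  calc countB a < countB (a + 1) := by omega
    _ ≤ countB b := countB_mono hab

/-- The `Primcodable ℚ` encoding equals counting valid codes below the structural code. -/
lemma denc_eq (q : ℚ) :
    @Encodable.encode ℚ (Primcodable.ofDenumerable ℚ).toEncodable q = countB (E q) := by
  have h0 : @Encodable.encode ℚ (Primcodable.ofDenumerable ℚ).toEncodable q =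
      (List.range (@Encodable.encode ℚ Rat.instEncodable q)).countP
        (fun y => @decide (y ∈ Set.range (@Encodable.encode ℚ Rat.instEncodable))
          (Encodable.decidableRangeEncode ℚ y)) := rfl
  rw [h0]
  have h1 : (fun y => @decide (y ∈ Set.range (@Encodable.encode ℚ Rat.instEncodable))
      (Encodable.decidableRangeEncode ℚ y)) = sP := by
    funext y
    rcases Bool.eq_false_or_eq_true (sP y) with h | h
    · simp [h, mem_range_iff y]
    · simp [h, decide_eq_false_iff_not, mem_range_iff y]
  rw [h1]
  rfl

/-- the target function -/
def NN (q : ℚ) : ℕ := Nat.pair q.num.natAbs q.den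

def B (q : ℚ) (k : ℕ) : Bool :=
  sP k && decide (countB k = @Encodable.encode ℚ (Primcodable.ofDenumerable ℚ).toEncodable q)

lemma rfind_eq (q : ℚ) : Nat.rfind (fun k => Part.some (B q k)) = Part.some (E q) := by
  apply Part.eq_some_iff.mpr
  apply Nat.mem_rfind.mpr
  constructor
  · apply Part.mem_some_iff.mpr
    symm
    have h1 : sP (E q) = true := (mem_range_iff (E q)).mp ⟨q, encode_eq_E q⟩
    have h2 : countB (E q) = @Encodable.encode ℚ (Primcodable.ofDenumerable ℚ).toEncodable q :=
      (denc_eq q).symm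
    simp [B, h1, h2]
  · intro m hm
    apply Part.mem_some_iff.mpr
    symm
    cases h : sP m with
    | false => simp [B, h]
    | true =>
        have hlt : countB m < countB (E q) := countB_strict hm h
        simp only [B, h, Bool.true_and, decide_eq_false_iff_not, denc_eq q]
        omega

lemma computable_NN : Computable NN := by
  have hBp : Primrec₂ B := by
    have h1 : Primrec fun p : ℚ × ℕ => sP p.2 := primrec_sP.comp Primrec.snd
    have h2 : Primrec fun p : ℚ × ℕ =>
        decide (countB p.2 = @Encodable.encode ℚ (Primcodable.ofDenumerable ℚ).toEncodable p.1) :=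
      (Primrec.eq.comp (primrec_countB.comp Primrec.snd) (Primrec.encode.comp Primrec.fst)).decide
    exact (Primrec₂.comp (Primrec.dom_bool₂ (· && ·)) h1 h2).to₂
  have h1 : Partrec fun q : ℚ => Nat.rfind fun k => Part.some (B q k) :=
    Partrec.rfind (Computable₂.partrec₂ hBp.to_comp)
  have hpost : Computable₂ fun (_ : ℚ) (k : ℕ) => Nat.pair (nAbs k.unpair.1) k.unpair.2 := by
    have hu1 : Primrec fun k : ℕ => k.unpair.1 := Primrec.fst.comp Primrec.unpair
    exact (Primrec₂.natPair.comp
      (primrec_nAbs.comp (hu1.comp Primrec.snd))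
      ((Primrec.snd.comp Primrec.unpair).comp Primrec.snd)).to_comp
  have h2 := h1.map hpost
  refine h2.of_eq_tot fun q => ?_
  rw [rfind_eq q, Part.map_some]
  apply Part.mem_some_iff.mpr
  show NN q = Nat.pair (nAbs (E q).unpair.1) (E q).unpair.2
  simp [E, NN, Nat.unpair_pair, nAbs_intEquivNat]

/-! Arithmetic lemmas -/

lemma key (n d : ℕ) (hd : d ≠ 0) (q : ℚ) (hq : q = (n : ℚ) / (d : ℚ)) :
    q.num.natAbs * d / q.den = n := by
  have hd' : (d : ℚ) ≠ 0 := Nat.cast_ne_zero.mpr hd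
  have hden : (q.den : ℤ) ∣ (d : ℤ) := by
    have : q = ((n : ℤ) : ℚ) / ((d : ℤ) : ℚ) := by push_cast; exact hq
    rw [this, ← Rat.divInt_eq_div]
    exact Rat.den_dvd _ _
  obtain ⟨m, hm⟩ : q.den ∣ d := Int.ofNat_dvd.mp hden
  have hq0 : 0 ≤ q := hq ▸ div_nonneg (Nat.cast_nonneg n) (Nat.cast_nonneg d)
  have hden0 : (q.den : ℚ) ≠ 0 := Nat.cast_ne_zero.mpr q.den_nz
  have hmain : (n : ℤ) = q.num * m := by
    have h1 : (n : ℚ) = q * d := by rw [hq, div_mul_cancel₀ _ hd']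
    have h2 : (n : ℚ) = (q.num : ℚ) * (m : ℚ) := by
      rw [h1]
      conv_lhs => rw [← Rat.num_div_den q]
      rw [hm]
      push_cast
      rw [div_mul_eq_mul_div, div_eq_iff hden0]
      ring
    exact_mod_cast h2
  have hn : n = q.num.natAbs * m := by
    have h3 := congrArg Int.natAbs hmain
    simpa [Int.natAbs_mul] using h3
  rw [hm, hn, ← Nat.mul_assoc q.num.natAbs q.den m]
  rw [Nat.mul_comm q.num.natAbs q.den, Nat.mul_assoc,
    Nat.mul_div_cancel_left _ (Nat.pos_of_ne_zero q.den_nz)]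

lemma geom (k : ℕ) : (∑ i ∈ Finset.range k, (2 : ℚ) ^ i) = ((2 ^ k - 1 : ℕ) : ℚ) := by
  have h2 : (2 : ℚ) ≠ 1 := by norm_num
  rw [geom_sum_eq h2]
  have : (1 : ℕ) ≤ 2 ^ k := Nat.one_le_two_pow
  push_cast [this]
  ring

lemma two_pow_iterate (n : ℕ) : (fun x => 2 * x)^[n] 1 = 2 ^ n := by
  induction n with
  | zero => rfl
  | succ n ih => rw [Function.iterate_succ_apply', ih, pow_succ]; ring

lemma primrec_two_pow : Primrec fun n : ℕ => 2 ^ n :=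
  (Primrec.nat_iterate Primrec.id (Primrec.const 1)
    (Primrec.nat_double.comp Primrec.snd).to₂).of_eq two_pow_iterate

end HPaux

theorem computable_of_computable_haltingProbApprox (f : ℕ → ℕ)
    (hf : ∀ i, f i ≤ 2 ^ i) (HP : ℕ → ℚ)
    (hHP : ∀ k, HP k =
      (∑ i ∈ Finset.range k, (f i : ℚ)) / (∑ i ∈ Finset.range k, (2 : ℚ) ^ i))
    (h : Computable HP) :
    Computable f := by
  -- partial sums of f, recovered from HP
  set S : ℕ → ℕ := fun k => ∑ i ∈ Finset.range k, f i with hS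
  have hA : ∀ k, (HPaux.NN (HP k)).unpair.1 * (2 ^ k - 1) / (HPaux.NN (HP k)).unpair.2 = S k := by
    intro k
    have hup : (HPaux.NN (HP k)).unpair.1 = (HP k).num.natAbs ∧ (HPaux.NN (HP k)).unpair.2 = (HP k).den := by
      simp [HPaux.NN, Nat.unpair_pair]
    rw [hup.1, hup.2]
    rcases Nat.eq_zero_or_pos k with rfl | hk
    · simp [hS]
    · have hd : 2 ^ k - 1 ≠ 0 := by
        have : 2 ≤ 2 ^ k := by
          calc 2 = 2 ^ 1 := rfl
          _ ≤ 2 ^ k := Nat.pow_le_pow_right (by norm_num) hk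
        omega
      refine HPaux.key (S k) (2 ^ k - 1) hd (HP k) ?_
      rw [hHP k, HPaux.geom k]
      congr 1
      push_cast [hS]
      rfl
  -- computability assembly
  have hN : Computable fun k : ℕ => HPaux.NN (HP k) := HPaux.computable_NN.comp h
  have hpair : Computable fun k : ℕ => (k, HPaux.NN (HP k)) := Computable.id.pair hN
  have hg : Primrec fun p : ℕ × ℕ => p.2.unpair.1 * (2 ^ p.1 - 1) / p.2.unpair.2 := by
    have h21 : Primrec fun p : ℕ × ℕ => p.2.unpair.1 :=
      Primrec.fst.comp (Primrec.unpair.comp Primrec.snd)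
    have h22 : Primrec fun p : ℕ × ℕ => p.2.unpair.2 :=
      Primrec.snd.comp (Primrec.unpair.comp Primrec.snd)
    have hpow : Primrec fun p : ℕ × ℕ => 2 ^ p.1 - 1 :=
      Primrec.nat_sub.comp (HPaux.primrec_two_pow.comp Primrec.fst) (Primrec.const 1)
    exact Primrec.nat_div.comp (Primrec.nat_mul.comp h21 hpow) h22
  have hAc : Computable fun k : ℕ => S k := by
    refine (hg.to_comp.comp hpair).of_eq fun k => ?_
    exact hA k
  have hfc : Computable fun k : ℕ => S (k + 1) - S k :=
    Primrec.nat_sub.to_comp.comp (hAc.comp Computable.succ) hAc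
  refine hfc.of_eq fun k => ?_
  simp only [hS, Finset.sum_range_succ]
  omega
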